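/- Let m∈ℤ, ω∈ℝ, α∈ℝ and λ∈ℝ, let V be the radial potential built from (m, ω, α, λ), set ξ := i(Ξam − (r_+²+a²)ω)/Δ_-'(r_+) and p(r) := Δ_-(r)/(r²+a²). Suppose u(r) = exp( ξ·log(r−r_+) )·ρ(r) on (r_+,∞), where ρ:[r_+,∞)→ℂ is continuously differentiable with ρ(r_+) ≠ 0, that u solves p(r)·d/dr( p(r)·u'(r) ) + (ω² − V(r))·u(r) = 0 on (r_+,∞), and that Im( p(r)·u'(r)·conj(u(r)) ) → 0 as r→∞. Then Ξam = (r_+²+a²)ω, that is, ω = ω_+. -/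

import Mathlib

open Set Filter Topology

lemma auxConst {f : ℝ → ℝ} {s : Set ℝ} (hs : Convex ℝ s) (ho : IsOpen s)
    (h : ∀ x ∈ s, HasDerivAt f 0 x) {x y : ℝ} (hx : x ∈ s) (hy : y ∈ s) : f x = f y := by
  apply hs.is_const_of_fderivWithin_eq_zero
    (fun z hz => ((h z hz).differentiableAt).differentiableWithinAt) _ hx hy
  intro z hz
  rw [fderivWithin_of_isOpen ho hz, (h z hz).hasFDerivAt.fderiv]
  ext
  simp

lemma auxKey (c d rp aa r A n i2 : ℝ) (hrr : r - rp ≠ 0) (hr2 : r ^ 2 + aa ≠ 0)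
    (hd0 : d ≠ 0) : A / (r ^ 2 + aa) * (c / d * (r - rp)⁻¹ * n + i2)
      = A / (r - rp) * (c / d * n) / (r ^ 2 + aa) + A / (r ^ 2 + aa) * i2 := by
  field_simp

lemma auxForward {H : ℝ → ℝ} {h₀ s₀ x : ℝ} (hcont : ContinuousOn H (Icc s₀ x))
    (hs₀x : s₀ ≤ x) (hs₀ : H s₀ = h₀)
    (hloc : ∀ r, s₀ ≤ r → r < x → H r = h₀ → ∃ ε > 0, ∀ s, r ≤ s → s < r + ε → H s = h₀) :
    H x = h₀ := by
  set T : Set ℝ := {r | r ∈ Icc s₀ x ∧ ∀ t ∈ Icc s₀ r, H t = h₀} with hT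
  have hs₀T : s₀ ∈ T := by
    refine ⟨⟨le_rfl, hs₀x⟩, fun t ht => ?_⟩
    have : t = s₀ := le_antisymm ht.2 ht.1
    rw [this, hs₀]
  have hbdd : BddAbove T := ⟨x, fun r hr => hr.1.2⟩
  set K := sSup T with hK
  have hK1 : s₀ ≤ K := le_csSup hbdd hs₀T
  have hK2 : K ≤ x := csSup_le ⟨s₀, hs₀T⟩ fun r hr => hr.1.2
  have hbelow : ∀ t, s₀ ≤ t → t < K → H t = h₀ := by
    intro t ht htK
    obtain ⟨r, hrT, htr⟩ := exists_lt_of_lt_csSup ⟨s₀, hs₀T⟩ htK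
    exact hrT.2 t ⟨ht, htr.le⟩
  have hHK : H K = h₀ := by
    rcases eq_or_lt_of_le hK1 with h | h
    · rw [← h]; exact hs₀
    · have hKm : K ∈ Icc s₀ x := ⟨hK1, hK2⟩
      have hcK : ContinuousWithinAt H (Ioo s₀ K) K :=
        (hcont K hKm).mono (fun z hz => ⟨hz.1.le, hz.2.le.trans hK2⟩)
      have hne : (𝓝[Ioo s₀ K] K).NeBot := by
        refine mem_closure_iff_nhdsWithin_neBot.mp ?_
        rw [closure_Ioo (ne_of_lt h)]
        exact ⟨hK1, le_rfl⟩
      have h1 : Tendsto H (𝓝[Ioo s₀ K] K) (𝓝 (H K)) := hcK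
      have h2 : Tendsto H (𝓝[Ioo s₀ K] K) (𝓝 h₀) := by
        apply Tendsto.congr' _ tendsto_const_nhds
        filter_upwards [self_mem_nhdsWithin] with z hz
        exact (hbelow z hz.1.le hz.2).symm
      exact tendsto_nhds_unique h1 h2
  have hKx : K = x := by
    by_contra hne
    have hKx' : K < x := lt_of_le_of_ne hK2 hne
    obtain ⟨ε, hε, hloc'⟩ := hloc K hK1 hKx' hHK
    set r' := min (K + ε / 2) x with hr'
    have hKr' : K < r' := lt_min (by linarith) hKx'
    have hr'T : r' ∈ T := by
      refine ⟨⟨hK1.trans hKr'.le, min_le_right _ _⟩, fun t ht => ?_⟩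
      rcases lt_or_ge t K with h' | h'
      · exact hbelow t ht.1 h'
      · exact hloc' t h' (lt_of_le_of_lt (ht.2.trans (min_le_left _ _)) (by linarith))
    exact absurd (le_csSup hbdd hr'T) (not_le.mpr hKr')
  rw [← hKx]; exact hHK

theorem stmt_17 (ℓ M a rp : ℝ) (hℓ : 0 < ℓ) (hM : 0 < M) (ha : |a| < ℓ) (hrp : 0 < rp)
    (Δ : ℝ → ℝ) (hΔ : ∀ r, Δ r = (r ^ 2 + a ^ 2) * (1 + r ^ 2 / ℓ ^ 2) - 2 * M * r)
    (hroot : Δ rp = 0) (hmax : ∀ r, Δ r = 0 → r ≤ rp) (hd : 0 < deriv Δ rp)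
    (Ξ : ℝ) (hΞ : Ξ = 1 - a ^ 2 / ℓ ^ 2)
    (m : ℤ) (ω α lam : ℝ)
    (ξ : ℂ) (hξ : ξ = Complex.I * ((Ξ * a * (m : ℝ) - (rp ^ 2 + a ^ 2) * ω : ℝ) : ℂ)
      / ((deriv Δ rp : ℝ) : ℂ))
    (p : ℝ → ℝ) (hp : ∀ r, p r = Δ r / (r ^ 2 + a ^ 2))
    (V : ℝ → ℝ) (hV : ∀ r, V r =
      ((-3) * r ^ 2 * (Δ r) ^ 2 / (r ^ 2 + a ^ 2) ^ 4
        + Δ r * (5 * r ^ 4 / ℓ ^ 2 + 3 * r ^ 2 * (1 + a ^ 2 / ℓ ^ 2) - 4 * M * r + a ^ 2)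
          / (r ^ 2 + a ^ 2) ^ 3)
      + ((Δ r * (lam + ω ^ 2 * a ^ 2) - Ξ ^ 2 * a ^ 2 * (m : ℝ) ^ 2
          - 2 * (m : ℝ) * ω * a * Ξ * (Δ r - (r ^ 2 + a ^ 2))) / (r ^ 2 + a ^ 2) ^ 2)
      + (-(α / ℓ ^ 2) * Δ r * (r ^ 2 + (if 0 < α then 1 else 0) * a ^ 2)
          / (r ^ 2 + a ^ 2) ^ 2))
    (ρ : ℝ → ℂ) (hρ : ContDiffOn ℝ 1 ρ (Ici rp)) (hρ0 : ρ rp ≠ 0)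
    (u : ℝ → ℂ)
    (hureg : ∀ r ∈ Ioi rp, u r = Complex.exp (ξ * Complex.log ((r - rp : ℝ) : ℂ)) * ρ r)
    (hODE : ∀ r ∈ Ioi rp,
      ((p r : ℝ) : ℂ) * deriv (fun s : ℝ => ((p s : ℝ) : ℂ) * deriv u s) r
        + (((ω ^ 2 - V r : ℝ)) : ℂ) * u r = 0)
    (hflux : Tendsto (fun r : ℝ => p r * (deriv u r * (starRingEnd ℂ) (u r)).im)
      atTop (nhds 0)) :
    Ξ * a * (m : ℝ) = (rp ^ 2 + a ^ 2) * ω := by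
  by_contra hne
  set c : ℝ := Ξ * a * (m : ℝ) - (rp ^ 2 + a ^ 2) * ω with hc
  have hc0 : c ≠ 0 := sub_ne_zero.mpr hne
  set d : ℝ := deriv Δ rp with hdd
  have hd0 : d ≠ 0 := ne_of_gt hd
  -- basic positivity
  have hra : ∀ r : ℝ, rp ≤ r → 0 < r ^ 2 + a ^ 2 := by
    intro r hr
    have : 0 < r := lt_of_lt_of_le hrp hr
    nlinarith [sq_nonneg a]
  have hR : 0 < rp ^ 2 + a ^ 2 := hra rp le_rfl
  -- Δ is differentiable
  have hΔfun : Δ = fun r => (r ^ 2 + a ^ 2) * (1 + r ^ 2 / ℓ ^ 2) - 2 * M * r := funext hΔ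
  have hΔdiff : ∀ x : ℝ, DifferentiableAt ℝ Δ x := by
    intro x; rw [hΔfun]; fun_prop
  have hΔcont : Continuous Δ := by rw [hΔfun]; fun_prop
  have hΔd : HasDerivAt Δ d rp := (hΔdiff rp).hasDerivAt
  -- slope limit at rp
  have hslope : Tendsto (fun r => Δ r / (r - rp)) (𝓝[>] rp) (𝓝 d) := by
    have h1 := hasDerivAt_iff_tendsto_slope.mp hΔd
    have h2 : Tendsto (slope Δ rp) (𝓝[>] rp) (𝓝 d) :=
      h1.mono_left (nhdsWithin_mono rp (fun z hz => ne_of_gt hz))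
    refine h2.congr (fun r => ?_)
    rw [slope_def_field, hroot, sub_zero]
  -- positivity of Δ on Ioi rp
  have hΔpos : ∀ r ∈ Ioi rp, 0 < Δ r := by
    intro r hr
    by_contra hle
    push_neg at hle
    -- find t ∈ (rp, r) with Δ t > 0
    have hev : ∀ᶠ z in 𝓝[>] rp, 0 < Δ z / (z - rp) := hslope.eventually (eventually_gt_nhds hd)
    have hev2 : Ioo rp r ∈ 𝓝[>] rp := Ioo_mem_nhdsGT_of_mem ⟨le_rfl, hr⟩
    obtain ⟨t, ht1, ht2⟩ := (hev.and (eventually_of_mem hev2 (fun z hz => hz))).exists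
    have htrp : rp < t := ht2.1
    have htr : t < r := ht2.2
    have hΔt : 0 < Δ t := by
      have hmul := mul_pos ht1 (sub_pos.mpr htrp)
      rwa [div_mul_cancel₀ _ (ne_of_gt (sub_pos.mpr htrp))] at hmul
    have hiv : (0 : ℝ) ∈ Icc (Δ r) (Δ t) := ⟨hle, hΔt.le⟩
    obtain ⟨s, hsmem, hs0⟩ := intermediate_value_Icc' htr.le hΔcont.continuousOn hiv
    have := hmax s hs0
    have := hsmem.1
    linarith
  have hppos : ∀ r ∈ Ioi rp, 0 < p r := by
    intro r hr
    rw [hp r]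
    exact div_pos (hΔpos r hr) (hra r (le_of_lt hr))
  -- derivative of ρ
  set w : ℝ → ℂ := derivWithin ρ (Ici rp) with hw
  have hρcont : ContinuousOn ρ (Ici rp) := hρ.continuousOn
  have hwcont : ContinuousOn w (Ici rp) :=
    hρ.continuousOn_derivWithin (uniqueDiffOn_Ici rp) le_rfl
  have hρd : ∀ r ∈ Ioi rp, HasDerivAt ρ (w r) r := by
    intro r hr
    have hmem : Ici rp ∈ 𝓝 r := Ici_mem_nhds hr
    have h1 : DifferentiableAt ℝ ρ r :=
      ((hρ.differentiableOn one_ne_zero) r (mem_Ici.mpr (le_of_lt hr))).differentiableAt hmem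
    have h2 : w r = deriv ρ r := derivWithin_of_mem_nhds hmem
    rw [h2]; exact h1.hasDerivAt
  -- ξ facts
  have hd0' : ((d : ℝ) : ℂ) ≠ 0 := Complex.ofReal_ne_zero.mpr hd0
  have hξ' : ξ = Complex.I * ((c / d : ℝ) : ℂ) := by
    rw [hξ]; push_cast; field_simp
  have hξre : ξ.re = 0 := by rw [hξ']; simp
  have hξim : ξ.im = c / d := by rw [hξ']; simp
  -- E and u
  set E : ℝ → ℂ := fun r => Complex.exp (ξ * ((Real.log (r - rp) : ℝ) : ℂ)) with hE
  have hureg' : ∀ r ∈ Ioi rp, u r = E r * ρ r := by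
    intro r hr
    rw [hureg r hr]
    show Complex.exp (ξ * Complex.log ((r - rp : ℝ) : ℂ)) * ρ r
      = Complex.exp (ξ * ((Real.log (r - rp) : ℝ) : ℂ)) * ρ r
    rw [Complex.ofReal_log (by simp only [mem_Ioi] at hr; linarith : (0:ℝ) ≤ r - rp)]
  have hEderiv : ∀ r ∈ Ioi rp, HasDerivAt E (E r * (ξ * (((r - rp)⁻¹ : ℝ) : ℂ))) r := by
    intro r hr
    have hr0 : r - rp ≠ 0 := ne_of_gt (sub_pos.mpr hr)
    have h1 : HasDerivAt (fun s : ℝ => Real.log (s - rp)) ((r - rp)⁻¹) r := by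
      have := (Real.hasDerivAt_log hr0).comp r ((hasDerivAt_id r).sub_const rp)
      simpa [Function.comp_def] using this
    exact ((h1.ofReal_comp).const_mul ξ).cexp
  set du : ℝ → ℂ := fun r => E r * (ξ * (((r - rp)⁻¹ : ℝ) : ℂ) * ρ r + w r) with hdu
  have hu' : ∀ r ∈ Ioi rp, HasDerivAt u (du r) r := by
    intro r hr
    have h1 := (hEderiv r hr).mul (hρd r hr)
    have h2 : HasDerivAt (fun s => E s * ρ s) (du r) r := by
      refine h1.congr_deriv ?_
      rw [hdu]; ring
    apply h2.congr_of_eventuallyEq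
    filter_upwards [IsOpen.mem_nhds isOpen_Ioi hr] with z hz
    exact hureg' z hz
  have hderivu : ∀ r ∈ Ioi rp, deriv u r = du r := fun r hr => (hu' r hr).deriv
  -- continuity
  have hlogcont : ContinuousOn (fun r : ℝ => Real.log (r - rp)) (Ioi rp) := by
    apply ContinuousOn.log (by fun_prop)
    intro r hr
    exact ne_of_gt (sub_pos.mpr hr)
  have hEcont : ContinuousOn E (Ioi rp) := by
    apply Complex.continuous_exp.comp_continuousOn
    exact continuousOn_const.mul (Complex.continuous_ofReal.comp_continuousOn hlogcont)
  have hinvcont : ContinuousOn (fun r : ℝ => (((r - rp)⁻¹ : ℝ) : ℂ)) (Ioi rp) := by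
    apply Complex.continuous_ofReal.comp_continuousOn
    apply ContinuousOn.inv₀ (by fun_prop)
    intro r hr
    exact ne_of_gt (sub_pos.mpr hr)
  have hducont : ContinuousOn du (Ioi rp) := by
    apply hEcont.mul
    exact ((continuousOn_const.mul hinvcont).mul
      (hρcont.mono Ioi_subset_Ici_self)).add (hwcont.mono Ioi_subset_Ici_self)
  have hpfun : p = fun r => Δ r / (r ^ 2 + a ^ 2) := funext hp
  have hpc : ContinuousOn p (Ici rp) := by
    rw [hpfun]
    exact hΔcont.continuousOn.div (by fun_prop) (fun r hr => ne_of_gt (hra r hr))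
  set H : ℝ → ℝ := fun r => p r * (deriv u r * (starRingEnd ℂ) (u r)).im with hH
  have hHe : ∀ r ∈ Ioi rp, H r = p r * (du r * (starRingEnd ℂ) (E r * ρ r)).im := by
    intro r hr
    rw [hH]
    simp only
    rw [hderivu r hr, hureg' r hr]
  have hHcont : ContinuousOn H (Ioi rp) := by
    apply ContinuousOn.congr (f := fun r => p r * (du r * (starRingEnd ℂ) (E r * ρ r)).im)
      _ (fun r hr => hHe r hr)
    apply (hpc.mono Ioi_subset_Ici_self).mul
    apply Complex.continuous_im.comp_continuousOn
    exact hducont.mul (continuous_star.comp_continuousOn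
      (hEcont.mul (hρcont.mono Ioi_subset_Ici_self)))
  -- ODE consequence
  have hg : ∀ r ∈ Ioi rp, u r ≠ 0 → V r ≠ ω ^ 2 →
      HasDerivAt (fun s : ℝ => ((p s : ℝ) : ℂ) * deriv u s)
        ((((V r - ω ^ 2) / p r : ℝ) : ℂ) * u r) r := by
    intro r hr hu0 hV0
    have hpr : p r ≠ 0 := ne_of_gt (hppos r hr)
    have hode := hODE r hr
    have hpr' : ((p r : ℝ) : ℂ) ≠ 0 := Complex.ofReal_ne_zero.mpr hpr
    have heq : deriv (fun s : ℝ => ((p s : ℝ) : ℂ) * deriv u s) r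
        = (((V r - ω ^ 2) / p r : ℝ) : ℂ) * u r := by
      have key : ((p r : ℝ) : ℂ) * deriv (fun s : ℝ => ((p s : ℝ) : ℂ) * deriv u s) r
          = (((V r - ω ^ 2) : ℝ) : ℂ) * u r := by
        push_cast at hode ⊢
        linear_combination hode
      have h2 : ((p r : ℝ) : ℂ) * ((((V r - ω ^ 2) / p r : ℝ) : ℂ) * u r)
          = ((p r : ℝ) : ℂ) * deriv (fun s : ℝ => ((p s : ℝ) : ℂ) * deriv u s) r := by
        rw [key]
        have hpc' : ((p r : ℝ) : ℂ) ≠ 0 := Complex.ofReal_ne_zero.mpr hpr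
        push_cast
        field_simp
      exact (mul_left_cancel₀ hpr' h2).symm
    have hne0 : (((V r - ω ^ 2) / p r : ℝ) : ℂ) * u r ≠ 0 := by
      apply mul_ne_zero _ hu0
      rw [Complex.ofReal_ne_zero]
      exact div_ne_zero (sub_ne_zero.mpr hV0) hpr
    have hdiff : DifferentiableAt ℝ (fun s : ℝ => ((p s : ℝ) : ℂ) * deriv u s) r := by
      by_contra hnd
      rw [deriv_zero_of_not_differentiableAt hnd] at heq
      exact hne0 heq.symm
    have h3 := hdiff.hasDerivAt
    rwa [heq] at h3
  -- rewrite H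
  have hHrw : H = fun s => ((((p s : ℝ) : ℂ) * deriv u s) * star (u s)).im := by
    funext s
    rw [hH]
    simp only
    rw [mul_assoc, ← starRingEnd_apply, Complex.mul_im]
    simp
  -- derivative of H is zero at good points
  have hH0 : ∀ r ∈ Ioi rp, u r ≠ 0 → V r ≠ ω ^ 2 → HasDerivAt H 0 r := by
    intro r hr hu0 hV0
    have h1 := (hg r hr hu0 hV0).mul ((hu' r hr).star)
    have h2 := Complex.imCLM.hasFDerivAt.comp_hasDerivAt r h1
    have hval : Complex.imCLM ((((V r - ω ^ 2) / p r : ℝ) : ℂ) * u r * star (u r)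
        + ((p r : ℝ) : ℂ) * deriv u r * star (du r)) = 0 := by
      rw [hderivu r hr]
      have e1 : (((V r - ω ^ 2) / p r : ℝ) : ℂ) * u r * star (u r)
          + ((p r : ℝ) : ℂ) * du r * star (du r)
          = ((((V r - ω ^ 2) / p r) * Complex.normSq (u r)
              + p r * Complex.normSq (du r) : ℝ) : ℂ) := by
        rw [mul_assoc, mul_assoc, ← starRingEnd_apply, ← starRingEnd_apply,
          Complex.mul_conj, Complex.mul_conj]
        push_cast
        ring
      rw [e1]
      rw [Complex.imCLM_apply, Complex.ofReal_im]
    rw [hval] at h2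
    rw [hHrw]
    exact h2
  -- V at the horizon
  have hVrp : V rp - ω ^ 2 = -(c ^ 2) / (rp ^ 2 + a ^ 2) ^ 2 := by
    rw [hV rp, hroot, hc]
    field_simp
    ring
  have hW0 : V rp - ω ^ 2 ≠ 0 := by
    rw [hVrp]
    have hpos : (0:ℝ) < c ^ 2 / (rp ^ 2 + a ^ 2) ^ 2 := by positivity
    intro h
    rw [neg_div, neg_eq_zero] at h
    exact absurd h (ne_of_gt hpos)
  -- analyticity of V - ω²
  have hℓ2 : (ℓ ^ 2 : ℝ) ≠ 0 := by positivity
  have hΔan : ∀ x : ℝ, AnalyticAt ℝ Δ x := by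
    intro x
    rw [hΔfun]
    exact (((analyticAt_id.pow 2).add analyticAt_const).mul
      (analyticAt_const.add ((analyticAt_id.pow 2).div analyticAt_const hℓ2))).sub
      (analyticAt_const.mul analyticAt_id)
  have hWan : ∀ x ∈ Ioi (0:ℝ), AnalyticAt ℝ (fun r => V r - ω ^ 2) x := by
    intro x hx
    have hx0 : 0 < x := mem_Ioi.mp hx
    have hx2 : (x ^ 2 + a ^ 2 : ℝ) ≠ 0 := by nlinarith [sq_nonneg a]
    have hVfun : (fun r => V r - ω ^ 2) = fun r =>
      (((-3) * r ^ 2 * (Δ r) ^ 2 / (r ^ 2 + a ^ 2) ^ 4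
        + Δ r * (5 * r ^ 4 / ℓ ^ 2 + 3 * r ^ 2 * (1 + a ^ 2 / ℓ ^ 2) - 4 * M * r + a ^ 2)
          / (r ^ 2 + a ^ 2) ^ 3)
      + ((Δ r * (lam + ω ^ 2 * a ^ 2) - Ξ ^ 2 * a ^ 2 * (m : ℝ) ^ 2
          - 2 * (m : ℝ) * ω * a * Ξ * (Δ r - (r ^ 2 + a ^ 2))) / (r ^ 2 + a ^ 2) ^ 2)
      + (-(α / ℓ ^ 2) * Δ r * (r ^ 2 + (if 0 < α then 1 else 0) * a ^ 2)
          / (r ^ 2 + a ^ 2) ^ 2)) - ω ^ 2 := by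
      funext r
      rw [hV r]
    rw [hVfun]
    have hid : AnalyticAt ℝ (fun r : ℝ => r) x := analyticAt_id
    have hden : AnalyticAt ℝ (fun r : ℝ => r ^ 2 + a ^ 2) x := (hid.pow 2).add analyticAt_const
    have hA : AnalyticAt ℝ
        (fun r : ℝ => (-3) * r ^ 2 * (Δ r) ^ 2 / (r ^ 2 + a ^ 2) ^ 4) x :=
      ((analyticAt_const.mul (hid.pow 2)).mul ((hΔan x).pow 2)).div (hden.pow 4)
        (pow_ne_zero _ hx2)
    have hB : AnalyticAt ℝ (fun r : ℝ =>
        Δ r * (5 * r ^ 4 / ℓ ^ 2 + 3 * r ^ 2 * (1 + a ^ 2 / ℓ ^ 2) - 4 * M * r + a ^ 2)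
          / (r ^ 2 + a ^ 2) ^ 3) x := by
      refine AnalyticAt.div ((hΔan x).mul ?_) (hden.pow 3) (pow_ne_zero _ hx2)
      exact ((((analyticAt_const.mul (hid.pow 4)).div analyticAt_const hℓ2).add
        ((analyticAt_const.mul (hid.pow 2)).mul analyticAt_const)).sub
        (analyticAt_const.mul hid)).add analyticAt_const
    have hC : AnalyticAt ℝ (fun r : ℝ =>
        (Δ r * (lam + ω ^ 2 * a ^ 2) - Ξ ^ 2 * a ^ 2 * (m : ℝ) ^ 2
          - 2 * (m : ℝ) * ω * a * Ξ * (Δ r - (r ^ 2 + a ^ 2))) / (r ^ 2 + a ^ 2) ^ 2) x := by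
      refine AnalyticAt.div ?_ (hden.pow 2) (pow_ne_zero _ hx2)
      exact (((hΔan x).mul analyticAt_const).sub analyticAt_const).sub
        (analyticAt_const.mul ((hΔan x).sub hden))
    have hD : AnalyticAt ℝ (fun r : ℝ =>
        -(α / ℓ ^ 2) * Δ r * (r ^ 2 + (if 0 < α then 1 else 0) * a ^ 2)
          / (r ^ 2 + a ^ 2) ^ 2) x :=
      ((analyticAt_const.mul (hΔan x)).mul ((hid.pow 2).add analyticAt_const)).div
        (hden.pow 2) (pow_ne_zero _ hx2)
    exact (((hA.add hB).add hC).add hD).sub analyticAt_const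
  -- isolated zeros of V - ω²
  have hWne : ∀ r ∈ Ioi rp, ∀ᶠ z in 𝓝[≠] r, V z ≠ ω ^ 2 := by
    intro r hr
    have hx : r ∈ Ioi (0:ℝ) := lt_trans hrp hr
    rcases (hWan r hx).eventually_eq_zero_or_eventually_ne_zero with h | h
    · exfalso
      have hEq : EqOn (fun r => V r - ω ^ 2) 0 (Ioi (0:ℝ)) := by
        apply AnalyticOnNhd.eqOn_zero_of_preconnected_of_eventuallyEq_zero
          (fun x hx => hWan x hx) isPreconnected_Ioi hx
        filter_upwards [h] with z hz
        simpa using hz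
      exact hW0 (hEq (mem_Ioi.mpr hrp))
    · filter_upwards [h] with z hz hzz
      exact hz (by simp [hzz])
  have hVev : ∀ᶠ z in 𝓝 rp, V z ≠ ω ^ 2 := by
    have hcw : ContinuousAt (fun r => V r - ω ^ 2) rp :=
      (hWan rp (mem_Ioi.mpr hrp)).continuousAt
    filter_upwards [hcw.eventually_ne hW0] with z hz hzz
    exact hz (by simp [hzz])
  -- explicit form of H
  have hE1 : ∀ r : ℝ, E r * (starRingEnd ℂ) (E r) = 1 := by
    intro r
    rw [hE]
    simp only
    rw [← Complex.exp_conj, ← Complex.exp_add, Complex.add_conj]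
    have : (ξ * ((Real.log (r - rp) : ℝ) : ℂ)).re = 0 := by
      rw [Complex.mul_re]
      simp [hξre]
    rw [this]
    simp
  have hHform : ∀ r ∈ Ioi rp, H r =
      (Δ r / (r - rp)) * ((c / d) * Complex.normSq (ρ r)) / (r ^ 2 + a ^ 2)
      + p r * (w r * (starRingEnd ℂ) (ρ r)).im := by
    intro r hr
    have hrr : r - rp ≠ 0 := ne_of_gt (sub_pos.mpr hr)
    have hr2 : (r ^ 2 + a ^ 2 : ℝ) ≠ 0 := ne_of_gt (hra r (le_of_lt hr))
    have step1 : du r * (starRingEnd ℂ) (E r * ρ r)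
        = ξ * (((r - rp)⁻¹ : ℝ) : ℂ) * ((Complex.normSq (ρ r) : ℝ) : ℂ)
          + w r * (starRingEnd ℂ) (ρ r) := by
      rw [hdu]
      simp only
      rw [map_mul]
      have hre : E r * (ξ * (((r - rp)⁻¹ : ℝ) : ℂ) * ρ r + w r)
          * ((starRingEnd ℂ) (E r) * (starRingEnd ℂ) (ρ r))
          = (E r * (starRingEnd ℂ) (E r))
            * ((ξ * (((r - rp)⁻¹ : ℝ) : ℂ) * ρ r + w r) * (starRingEnd ℂ) (ρ r)) := by
        ring
      rw [hre, hE1 r, one_mul, add_mul, mul_assoc _ (ρ r) _, Complex.mul_conj]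
    rw [hHe r hr, step1]
    have him : (ξ * (((r - rp)⁻¹ : ℝ) : ℂ) * ((Complex.normSq (ρ r) : ℝ) : ℂ)
        + w r * (starRingEnd ℂ) (ρ r)).im
        = ξ.im * (r - rp)⁻¹ * Complex.normSq (ρ r) + (w r * (starRingEnd ℂ) (ρ r)).im := by
      rw [Complex.add_im, Complex.mul_im, Complex.mul_im]
      simp only [Complex.ofReal_re, Complex.ofReal_im]
      ring
    rw [him, hξim, hp r]
    exact auxKey c d rp (a ^ 2) r _ _ _ hrr hr2 hd0
  -- the limit value at the horizon
  set h₀ : ℝ := c * Complex.normSq (ρ rp) / (rp ^ 2 + a ^ 2) with hh₀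
  have hn0 : Complex.normSq (ρ rp) ≠ 0 := by
    simpa [Complex.normSq_eq_zero] using hρ0
  have hh₀0 : h₀ ≠ 0 := by
    rw [hh₀]
    exact div_ne_zero (mul_ne_zero hc0 hn0) (ne_of_gt hR)
  have hmono : 𝓝[>] rp ≤ 𝓝[Ici rp] rp := nhdsWithin_mono rp Ioi_subset_Ici_self
  have hHlim : Tendsto H (𝓝[>] rp) (𝓝 h₀) := by
    have hc2 : Tendsto (fun r => Complex.normSq (ρ r)) (𝓝[>] rp)
        (𝓝 (Complex.normSq (ρ rp))) :=
      (Complex.continuous_normSq.continuousAt.tendsto.comp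
        ((hρcont rp (mem_Ici.mpr le_rfl)).mono_left hmono))
    have hc3 : Tendsto p (𝓝[>] rp) (𝓝 0) := by
      have := (hpc rp (mem_Ici.mpr le_rfl)).mono_left hmono
      rwa [hp rp, hroot, zero_div] at this
    have hc4 : Tendsto (fun r => (w r * (starRingEnd ℂ) (ρ r)).im) (𝓝[>] rp)
        (𝓝 ((w rp * (starRingEnd ℂ) (ρ rp)).im)) := by
      apply Complex.continuous_im.continuousAt.tendsto.comp
      exact (((hwcont rp (mem_Ici.mpr le_rfl)).mul
        ((continuous_star.comp_continuousOn hρcont) rp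
          (mem_Ici.mpr le_rfl))).mono_left hmono)
    have hc5 : Tendsto (fun r : ℝ => r ^ 2 + a ^ 2) (𝓝[>] rp) (𝓝 (rp ^ 2 + a ^ 2)) :=
      ((continuous_pow 2).add continuous_const).continuousAt.tendsto.mono_left
        nhdsWithin_le_nhds
    have hmain : Tendsto (fun r => Δ r / (r - rp) * (c / d * Complex.normSq (ρ r))
          / (r ^ 2 + a ^ 2) + p r * (w r * (starRingEnd ℂ) (ρ r)).im) (𝓝[>] rp)
        (𝓝 (d * (c / d * Complex.normSq (ρ rp)) / (rp ^ 2 + a ^ 2)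
          + 0 * (w rp * (starRingEnd ℂ) (ρ rp)).im)) :=
      ((hslope.mul (tendsto_const_nhds.mul hc2)).div hc5 (ne_of_gt hR)).add
        (hc3.mul hc4)
    have heval : d * (c / d * Complex.normSq (ρ rp)) / (rp ^ 2 + a ^ 2)
        + 0 * ((w rp * (starRingEnd ℂ) (ρ rp)).im) = h₀ := by
      have h6 : d * (c / d) = c := by
        rw [mul_comm, div_mul_cancel₀ _ hd0]
      rw [hh₀, zero_mul, add_zero, ← mul_assoc, h6]
    rw [heval] at hmain
    apply hmain.congr'
    filter_upwards [self_mem_nhdsWithin] with z hz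
    exact (hHform z hz).symm
  -- a good interval to the right of rp
  have hgood : ∃ b > rp, ∀ z ∈ Ioo rp b, u z ≠ 0 ∧ V z ≠ ω ^ 2 := by
    have h1 : ∀ᶠ z in 𝓝[>] rp, ρ z ≠ 0 :=
      (((hρcont rp (mem_Ici.mpr le_rfl)) : Tendsto ρ (𝓝[Ici rp] rp)
        (𝓝 (ρ rp))).eventually_ne hρ0).filter_mono hmono
    have h2 : ∀ᶠ z in 𝓝[>] rp, V z ≠ ω ^ 2 := hVev.filter_mono nhdsWithin_le_nhds
    have h3 : ∀ᶠ z in 𝓝[>] rp, z ∈ Ioi rp := eventually_mem_nhdsWithin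
    obtain ⟨b, hb, hsub⟩ := mem_nhdsGT_iff_exists_Ioo_subset.mp
      ((h1.and (h2.and h3)) : _ ∈ 𝓝[>] rp)
    refine ⟨b, hb, fun z hz => ?_⟩
    obtain ⟨hz1, hz2, hz3⟩ := hsub hz
    refine ⟨?_, hz2⟩
    rw [hureg' z hz3]
    exact mul_ne_zero (Complex.exp_ne_zero _) hz1
  obtain ⟨b, hbrp, hbgood⟩ := hgood
  -- H is constant equal to h₀ on Ioo rp b
  have hIconst : ∀ z ∈ Ioo rp b, H z = h₀ := by
    have hder : ∀ z ∈ Ioo rp b, HasDerivAt H 0 z := fun z hz =>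
      hH0 z hz.1 (hbgood z hz).1 (hbgood z hz).2
    intro z hz
    have hconst : ∀ y ∈ Ioo rp b, H y = H z := fun y hy =>
      auxConst (convex_Ioo rp b) isOpen_Ioo hder hy hz
    have hev : H =ᶠ[𝓝[>] rp] fun _ => H z := by
      filter_upwards [Ioo_mem_nhdsGT_of_mem ⟨le_rfl, hbrp⟩] with y hy
      exact hconst y hy
    have ht : Tendsto H (𝓝[>] rp) (𝓝 (H z)) := (tendsto_congr' hev).mpr tendsto_const_nhds
    exact tendsto_nhds_unique ht hHlim
  -- globalization
  set s₀ : ℝ := (rp + b) / 2 with hs₀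
  have hs₀I : s₀ ∈ Ioo rp b := ⟨by rw [hs₀]; linarith, by rw [hs₀]; linarith⟩
  have hs₀rp : rp < s₀ := hs₀I.1
  have hglob : ∀ x, s₀ ≤ x → H x = h₀ := by
    intro x hx
    apply auxForward (hHcont.mono (fun z hz => lt_of_lt_of_le hs₀rp hz.1)) hx
      (hIconst s₀ hs₀I)
    intro r hrs hrx hHr
    have hrIoi : r ∈ Ioi rp := mem_Ioi.mpr (lt_of_lt_of_le hs₀rp hrs)
    have hur : u r ≠ 0 := by
      intro h0
      apply hh₀0
      rw [← hHr, hH]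
      simp [h0]
    have hev1 : ∀ᶠ z in 𝓝 r, u z ≠ 0 := ((hu' r hrIoi).continuousAt).eventually_ne hur
    have hev2 : ∀ᶠ z in 𝓝 r, z ∈ Ioi rp := isOpen_Ioi.eventually_mem hrIoi
    have hev4 : ∀ᶠ z in 𝓝[≠] r, (u z ≠ 0 ∧ z ∈ Ioi rp) ∧ V z ≠ ω ^ 2 := by
      filter_upwards [(hev1.and hev2).filter_mono nhdsWithin_le_nhds, hWne r hrIoi]
        with z hz1 hz2
      exact ⟨hz1, hz2⟩
    obtain ⟨ε, hε, hball⟩ := Metric.mem_nhdsWithin_iff.mp hev4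
    refine ⟨ε, hε, fun s hs1 hs2 => ?_⟩
    rcases eq_or_lt_of_le hs1 with h | h
    · rw [← h]; exact hHr
    · have hJ : ∀ z ∈ Ioo r (r + ε), HasDerivAt H 0 z := by
        intro z hz
        have hzb : z ∈ Metric.ball r ε ∩ {r}ᶜ := by
          constructor
          · rw [Metric.mem_ball, Real.dist_eq, abs_of_pos (sub_pos.mpr hz.1)]
            linarith [hz.2]
          · exact ne_of_gt hz.1
        obtain ⟨⟨hz1, hz2⟩, hz3⟩ := hball hzb
        exact hH0 z hz2 hz1 hz3
      have hconst2 : ∀ y ∈ Ioo r (r + ε), H y = H s := fun y hy =>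
        auxConst (convex_Ioo r (r + ε)) isOpen_Ioo hJ hy ⟨h, hs2⟩
      have hcr : ContinuousAt H r := hHcont.continuousAt (isOpen_Ioi.mem_nhds hrIoi)
      have ht1 : Tendsto H (𝓝[>] r) (𝓝 (H r)) := hcr.tendsto.mono_left nhdsWithin_le_nhds
      have hevc : H =ᶠ[𝓝[>] r] fun _ => H s := by
        filter_upwards [Ioo_mem_nhdsGT_of_mem ⟨le_rfl, lt_add_of_pos_right r hε⟩]
          with y hy
        exact hconst2 y hy
      have ht2 : Tendsto H (𝓝[>] r) (𝓝 (H s)) := (tendsto_congr' hevc).mpr tendsto_const_nhds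
      have hrs' := tendsto_nhds_unique ht1 ht2
      rw [← hrs']
      exact hHr
  -- final contradiction with the flux condition
  have hevT : H =ᶠ[atTop] fun _ => h₀ := by
    filter_upwards [eventually_ge_atTop s₀] with x hx
    exact hglob x hx
  have hTT : Tendsto H atTop (𝓝 h₀) := (tendsto_congr' hevT).mpr tendsto_const_nhds
  exact hh₀0 (tendsto_nhds_unique hflux hTT).symm
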